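/- Let G be a unitary on ℂ² ⊗ ℂ² commuting with the swap operator S, and suppose there exist orthonormal bases {|μ₀⟩, |μ₁⟩} and {|μ̃₀⟩, |μ̃₁⟩} of ℂ² such that G (|μ_i⟩⟨μ_i| ⊗ |μ_j⟩⟨μ_j|) G* = |μ̃_i⟩⟨μ̃_i| ⊗ |μ̃_j⟩⟨μ̃_j| for all i, j ∈ {0,1}. Then there exist a unitary V on ℂ², real numbers θ₀₀, θ₁₁, and a complex number c with |c| = 1, such that G = c (V ⊗ V) F, where F := e^{iθ₀₀} |μ₀⟩⟨μ₀| ⊗ |μ₀⟩⟨μ₀| + |μ₀⟩⟨μ₀| ⊗ |μ₁⟩⟨μ₁| + |μ₁⟩⟨μ₁| ⊗ |μ₀⟩⟨μ₀| + e^{iθ₁₁} |μ₁⟩⟨μ₁| ⊗ |μ₁⟩⟨μ₁|, V|μ_i⟩ is proportional to |μ̃_i⟩ for i = 0, 1, and the matrix of V in the basis {|μ₀⟩, |μ₁⟩} has equal, real, nonnegative diagonal entries. -/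

import Mathlib

open Kronecker Matrix

noncomputable section

/-- The swap operator on `ℂ² ⊗ ℂ²`, determined by `S(x ⊗ y) = y ⊗ x`. -/
def swapM2 : Matrix (Fin 2 × Fin 2) (Fin 2 × Fin 2) ℂ :=
  fun p q => if p.1 = q.2 ∧ p.2 = q.1 then 1 else 0

/-- The rank-one operator `|v⟩⟨v|`. -/
def outer (v : Fin 2 → ℂ) : Matrix (Fin 2) (Fin 2) ℂ := Matrix.vecMulVec v (star v)

namespace S11

def tens (a b : Fin 2 → ℂ) : Fin 2 × Fin 2 → ℂ := fun p => a p.1 * b p.2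

lemma mulM_vecMulVec {n : Type*} [Fintype n] (M : Matrix n n ℂ) (a b : n → ℂ) :
    M * vecMulVec a b = vecMulVec (M.mulVec a) b := by
  ext p q
  simp [Matrix.mul_apply, vecMulVec_apply, mulVec, dotProduct, Finset.sum_mul, mul_assoc]

lemma vecMulVec_mul_conjTranspose {n : Type*} [Fintype n]
    (G : Matrix n n ℂ) (a u : n → ℂ) :
    vecMulVec a (star u) * Gᴴ = vecMulVec a (star (G.mulVec u)) := by
  ext p q
  simp [Matrix.mul_apply, vecMulVec_apply, conjTranspose_apply, mulVec, dotProduct,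
    Finset.mul_sum, map_sum]
  apply Finset.sum_congr rfl
  intros; ring

lemma vecMulVec_mul_vecMulVec {n : Type*} [Fintype n] (a b c d : n → ℂ) :
    vecMulVec a (star b) * vecMulVec c (star d)
      = (dotProduct (star b) c) • vecMulVec a (star d) := by
  ext p q
  simp [Matrix.mul_apply, vecMulVec_apply, dotProduct, Finset.sum_mul, Finset.mul_sum]
  apply Finset.sum_congr rfl
  intros; ring

lemma kron_vecMulVec (a b c d : Fin 2 → ℂ) :
    vecMulVec a (star b) ⊗ₖ vecMulVec c (star d)
      = vecMulVec (tens a c) (star (tens b d)) := by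
  ext p q
  simp [Matrix.kroneckerMap_apply, vecMulVec_apply, tens]
  ring

lemma vecMulVec_mulVec' {n : Type*} [Fintype n] (a b x : n → ℂ) :
    (vecMulVec a b).mulVec x = (dotProduct b x) • a := by
  funext p
  simp [vecMulVec_apply, mulVec, dotProduct, Finset.sum_mul, Finset.mul_sum]
  apply Finset.sum_congr rfl
  intros; ring

lemma conjT_vecMulVec {n : Type*} (a b : n → ℂ) :
    (vecMulVec a b)ᴴ = vecMulVec (star b) (star a) := by
  ext p q
  simp [vecMulVec_apply, conjTranspose_apply, mul_comm]

lemma smul_vecMulVec_left {n : Type*} (z : ℂ) (a b : n → ℂ) :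
    vecMulVec (z • a) b = z • vecMulVec a b := by
  ext p q
  simp [vecMulVec_apply, mul_assoc]

lemma rank_one_eq {n : Type*} [Fintype n] {w v : n → ℂ}
    (hv : ∃ q, v q ≠ 0)
    (h : vecMulVec w (star w) = vecMulVec v (star v)) :
    ∃ z : ℂ, ‖z‖ = 1 ∧ w = z • v := by
  obtain ⟨q, hq⟩ := hv
  have hent : ∀ p r, w p * (starRingEnd ℂ) (w r) = v p * (starRingEnd ℂ) (v r) := by
    intro p r
    have := congrFun (congrFun h p) r
    simpa [vecMulVec_apply, Complex.star_def] using this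
  have hqq := hent q q
  have hnsq : Complex.normSq (w q) = Complex.normSq (v q) := by
    have := hqq
    rw [Complex.mul_conj, Complex.mul_conj] at this
    exact_mod_cast this
  have hwq : w q ≠ 0 := by
    intro h0
    apply hq
    rw [← Complex.normSq_eq_zero, ← hnsq, h0, map_zero]
  have hs : (starRingEnd ℂ) (w q) ≠ 0 := by simpa using hwq
  refine ⟨w q / v q, ?_, ?_⟩
  · have habs : ‖w q‖ = ‖v q‖ := by
      rw [Complex.norm_def, Complex.norm_def, hnsq]
    rw [norm_div, habs, div_self (by simpa using hq)]
  · funext p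
    have hp := hent p q
    have h2 : w p * v q * (starRingEnd ℂ) (w q) = v p * w q * (starRingEnd ℂ) (w q) := by
      linear_combination v q * hp - v p * hqq
    have h3 := mul_right_cancel₀ hs h2
    simp only [Pi.smul_apply, smul_eq_mul]
    field_simp
    linear_combination h3

lemma complete (μ : Fin 2 → Fin 2 → ℂ)
    (hμ : ∀ i j, dotProduct (star (μ i)) (μ j) = if i = j then 1 else 0) :
    outer (μ 0) + outer (μ 1) = 1 := by
  set A : Matrix (Fin 2) (Fin 2) ℂ := Matrix.of (fun p i => μ i p) with hA
  have h1 : Aᴴ * A = 1 := by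
    ext i j
    have := hμ i j
    simpa [Matrix.mul_apply, conjTranspose_apply, hA, dotProduct, Matrix.one_apply]
      using this
  have h2 : A * Aᴴ = 1 := mul_eq_one_comm.mp h1
  ext p q
  have := congrFun (congrFun h2 p) q
  simp only [Matrix.mul_apply, conjTranspose_apply, hA, Matrix.of_apply] at this
  simp only [Matrix.add_apply, outer, vecMulVec_apply, Pi.star_apply]
  rw [← this]
  simp [Fin.sum_univ_two]

lemma exists_ne_zero (μ : Fin 2 → Fin 2 → ℂ)
    (hμ : ∀ i j, dotProduct (star (μ i)) (μ j) = if i = j then 1 else 0)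
    (i : Fin 2) : ∃ p, μ i p ≠ 0 := by
  by_contra hc
  push_neg at hc
  have := hμ i i
  simp [dotProduct, hc] at this

lemma swapM2_mulVec (v : Fin 2 × Fin 2 → ℂ) (p : Fin 2 × Fin 2) :
    swapM2.mulVec v p = v (p.2, p.1) := by
  have hc : ∀ q : Fin 2 × Fin 2, swapM2 p q = if q = (p.2, p.1) then 1 else 0 := by
    intro q
    simp only [swapM2, Prod.ext_iff]
    refine if_congr ⟨fun ⟨a, b⟩ => ⟨b.symm, a.symm⟩, fun ⟨a, b⟩ => ⟨b.symm, a.symm⟩⟩ rfl rfl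
  simp [mulVec, dotProduct, hc]

lemma diag_abs_eq (μ μt : Fin 2 → Fin 2 → ℂ)
    (hμ : ∀ i j, dotProduct (star (μ i)) (μ j) = if i = j then 1 else 0)
    (hμt : ∀ i j, dotProduct (star (μt i)) (μt j) = if i = j then 1 else 0) :
    ‖dotProduct (star (μ 0)) (μt 0)‖
      = ‖dotProduct (star (μ 1)) (μt 1)‖ := by
  set A : Matrix (Fin 2) (Fin 2) ℂ := Matrix.of (fun p i => μ i p) with hAdef
  set B : Matrix (Fin 2) (Fin 2) ℂ := Matrix.of (fun p i => μt i p) with hBdef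
  have hA : Aᴴ * A = 1 := by
    ext i j
    simpa [Matrix.mul_apply, conjTranspose_apply, hAdef, dotProduct, Matrix.one_apply]
      using hμ i j
  have hB : Bᴴ * B = 1 := by
    ext i j
    simpa [Matrix.mul_apply, conjTranspose_apply, hBdef, dotProduct, Matrix.one_apply]
      using hμt i j
  set M : Matrix (Fin 2) (Fin 2) ℂ := Aᴴ * B with hMdef
  have hMentry : ∀ i j, M i j = dotProduct (star (μ i)) (μt j) := by
    intro i j
    simp [hMdef, Matrix.mul_apply, conjTranspose_apply, hAdef, hBdef, dotProduct]
  have hM1 : Mᴴ * M = 1 := by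
    have e : Mᴴ * M = Bᴴ * (A * Aᴴ) * B := by
      simp [hMdef, Matrix.conjTranspose_mul, Matrix.mul_assoc]
    rw [e, mul_eq_one_comm.mp hA, Matrix.mul_one, hB]
  have hM2 : M * Mᴴ = 1 := mul_eq_one_comm.mp hM1
  have hrow := congrFun (congrFun hM2 0) 0
  have hcol := congrFun (congrFun hM1 1) 1
  simp only [Matrix.mul_apply, conjTranspose_apply, Fin.sum_univ_two, Matrix.one_apply_eq]
    at hrow hcol
  simp only [Complex.star_def] at hrow hcol
  have hrow' : (Complex.normSq (M 0 0) : ℂ) + Complex.normSq (M 0 1) = 1 := by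
    rw [Complex.mul_conj, Complex.mul_conj] at hrow; exact_mod_cast hrow
  have hcol' : (Complex.normSq (M 0 1) : ℂ) + Complex.normSq (M 1 1) = 1 := by
    rw [mul_comm ((starRingEnd ℂ) (M 0 1)), mul_comm ((starRingEnd ℂ) (M 1 1)),
      Complex.mul_conj, Complex.mul_conj] at hcol
    exact_mod_cast hcol
  have hns : Complex.normSq (M 0 0) = Complex.normSq (M 1 1) := by
    have : (Complex.normSq (M 0 0) : ℂ) = Complex.normSq (M 1 1) := by
      linear_combination hrow' - hcol'
    exact_mod_cast this
  rw [← hMentry, ← hMentry, Complex.norm_def, Complex.norm_def, hns]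

end S11

theorem statement11 (G : Matrix (Fin 2 × Fin 2) (Fin 2 × Fin 2) ℂ)
    (hG : G ∈ Matrix.unitaryGroup (Fin 2 × Fin 2) ℂ)
    (hGS : G * swapM2 = swapM2 * G)
    (μ μt : Fin 2 → (Fin 2 → ℂ))
    (hμ : ∀ i j, dotProduct (star (μ i)) (μ j) = if i = j then 1 else 0)
    (hμt : ∀ i j, dotProduct (star (μt i)) (μt j) = if i = j then 1 else 0)
    (h : ∀ i j, G * (outer (μ i) ⊗ₖ outer (μ j)) * Gᴴ = outer (μt i) ⊗ₖ outer (μt j)) :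
    ∃ (V : Matrix (Fin 2) (Fin 2) ℂ) (θ00 θ11 : ℝ) (c : ℂ),
      V ∈ Matrix.unitaryGroup (Fin 2) ℂ ∧ ‖c‖ = 1 ∧
      G = c • ((V ⊗ₖ V) *
        (Complex.exp (Complex.I * (θ00 : ℂ)) • (outer (μ 0) ⊗ₖ outer (μ 0)) +
          outer (μ 0) ⊗ₖ outer (μ 1) + outer (μ 1) ⊗ₖ outer (μ 0) +
          Complex.exp (Complex.I * (θ11 : ℂ)) • (outer (μ 1) ⊗ₖ outer (μ 1)))) ∧
      (∀ i, ∃ z : ℂ, V.mulVec (μ i) = z • μt i) ∧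
      (∃ rr : ℝ, 0 ≤ rr ∧
        dotProduct (star (μ 0)) (V.mulVec (μ 0)) = (rr : ℂ) ∧
        dotProduct (star (μ 1)) (V.mulVec (μ 1)) = (rr : ℂ)) := by
  classical
  -- helper: a unimodular complex times its conjugate is 1
  have hmc : ∀ u : ℂ, ‖u‖ = 1 → u * (starRingEnd ℂ) u = 1 := by
    intro u hu
    rw [Complex.mul_conj, Complex.normSq_eq_norm_sq, hu]
    norm_num
  -- kron of outers as rank one
  have hkro : ∀ (a b : Fin 2 → ℂ),
      outer a ⊗ₖ outer b = vecMulVec (S11.tens a b) (star (S11.tens a b)) := by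
    intro a b
    exact S11.kron_vecMulVec a a b b
  -- Step 1: G maps tensor basis vectors to phases times target tensor vectors
  have step1 : ∀ i j, ∃ z : ℂ, ‖z‖ = 1 ∧
      G.mulVec (S11.tens (μ i) (μ j)) = z • S11.tens (μt i) (μt j) := by
    intro i j
    have hh := h i j
    rw [hkro, hkro, S11.mulM_vecMulVec, S11.vecMulVec_mul_conjTranspose] at hh
    obtain ⟨p1, hp1⟩ := S11.exists_ne_zero μt hμt i
    obtain ⟨p2, hp2⟩ := S11.exists_ne_zero μt hμt j
    exact S11.rank_one_eq ⟨(p1, p2), mul_ne_zero hp1 hp2⟩ hh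
  choose z hz1 hz2 using step1
  -- Step 2: z 0 1 = z 1 0
  have hswapvec : ∀ a b : Fin 2 → ℂ, swapM2.mulVec (S11.tens a b) = S11.tens b a := by
    intro a b
    funext p
    rw [S11.swapM2_mulVec]
    simp [S11.tens, mul_comm]
  have hzsym : z 0 1 = z 1 0 := by
    have e1 : G.mulVec (S11.tens (μ 1) (μ 0)) = (z 0 1) • S11.tens (μt 1) (μt 0) := by
      rw [← hswapvec (μ 0) (μ 1), Matrix.mulVec_mulVec, hGS, ← Matrix.mulVec_mulVec,
        hz2 0 1, Matrix.mulVec_smul, hswapvec]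
    rw [hz2 1 0] at e1
    obtain ⟨p1, hp1⟩ := S11.exists_ne_zero μt hμt 1
    obtain ⟨p2, hp2⟩ := S11.exists_ne_zero μt hμt 0
    have := congrFun e1 (p1, p2)
    simp only [Pi.smul_apply, smul_eq_mul, S11.tens] at this
    exact (mul_right_cancel₀ (mul_ne_zero hp1 hp2) this).symm
  -- Step 3: phases w i
  set m : Fin 2 → ℂ := fun i => dotProduct (star (μ i)) (μt i) with hmdef
  set w : Fin 2 → ℂ := fun i =>
    if m i = 0 then 1 else (starRingEnd ℂ) (m i) / ((‖m i‖ : ℝ) : ℂ) with hwdef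
  have habsw : ∀ i, ‖w i‖ = 1 := by
    intro i
    by_cases hmi : m i = 0
    · simp [hwdef, hmi]
    · have habsne : ((‖m i‖ : ℝ) : ℂ) ≠ 0 := by
        simpa using (norm_ne_zero_iff.mpr hmi)
      simp only [hwdef, hmi, if_false]
      rw [norm_div, Complex.norm_conj, Complex.norm_real, Real.norm_eq_abs,
        abs_of_nonneg (norm_nonneg _), div_self (norm_ne_zero_iff.mpr hmi)]
  have hwm : ∀ i, w i * m i = ((‖m i‖ : ℝ) : ℂ) := by
    intro i
    by_cases hmi : m i = 0
    · simp [hwdef, hmi]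
    · have habsne : ((‖m i‖ : ℝ) : ℂ) ≠ 0 := by
        simpa using (norm_ne_zero_iff.mpr hmi)
      simp only [hwdef, hmi, if_false]
      rw [div_mul_eq_mul_div, mul_comm, Complex.mul_conj, Complex.normSq_eq_norm_sq]
      rw [div_eq_iff habsne]
      push_cast
      ring
  -- Step 4: the local unitary V
  set V : Matrix (Fin 2) (Fin 2) ℂ :=
    w 0 • vecMulVec (μt 0) (star (μ 0)) + w 1 • vecMulVec (μt 1) (star (μ 1)) with hVdef
  have hVmul : ∀ i, V.mulVec (μ i) = w i • μt i := by
    intro i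
    rw [hVdef, Matrix.add_mulVec, Matrix.smul_mulVec, Matrix.smul_mulVec,
      S11.vecMulVec_mulVec', S11.vecMulVec_mulVec', hμ, hμ]
    fin_cases i <;> simp
  have hVouter : ∀ i, V * outer (μ i) = w i • vecMulVec (μt i) (star (μ i)) := by
    intro i
    rw [show outer (μ i) = vecMulVec (μ i) (star (μ i)) from rfl, S11.mulM_vecMulVec,
      hVmul, S11.smul_vecMulVec_left]
  have hVunit : V ∈ Matrix.unitaryGroup (Fin 2) ℂ := by
    rw [Matrix.mem_unitaryGroup_iff']
    have hstar : star V = (starRingEnd ℂ) (w 0) • vecMulVec (μ 0) (star (μt 0)) +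
        (starRingEnd ℂ) (w 1) • vecMulVec (μ 1) (star (μt 1)) := by
      show Vᴴ = _
      rw [hVdef, Matrix.conjTranspose_add, Matrix.conjTranspose_smul,
        Matrix.conjTranspose_smul, S11.conjT_vecMulVec, S11.conjT_vecMulVec]
      simp [Complex.star_def]
    rw [hstar, hVdef, add_mul, mul_add, mul_add]
    rw [smul_mul_assoc, smul_mul_assoc, smul_mul_assoc, smul_mul_assoc,
      mul_smul_comm, mul_smul_comm, mul_smul_comm, mul_smul_comm,
      S11.vecMulVec_mul_vecMulVec, S11.vecMulVec_mul_vecMulVec,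
      S11.vecMulVec_mul_vecMulVec, S11.vecMulVec_mul_vecMulVec,
      hμt 0 0, hμt 0 1, hμt 1 0, hμt 1 1]
    simp only [if_pos rfl, one_smul]
    norm_num
    rw [smul_smul, smul_smul, mul_comm ((starRingEnd ℂ) (w 0)) (w 0),
      mul_comm ((starRingEnd ℂ) (w 1)) (w 1), hmc _ (habsw 0), hmc _ (habsw 1),
      one_smul, one_smul]
    exact S11.complete μ hμ
  -- Step 5: scalars
  set c : ℂ := z 0 1 * (starRingEnd ℂ) (w 0) * (starRingEnd ℂ) (w 1) with hcdef
  have habsc : ‖c‖ = 1 := by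
    rw [hcdef]
    simp only [norm_mul, Complex.norm_conj]
    rw [hz1 0 1, habsw 0, habsw 1]
    norm_num
  set d00 : ℂ := z 0 0 * (starRingEnd ℂ) c * (starRingEnd ℂ) (w 0) * (starRingEnd ℂ) (w 0)
    with hd00def
  set d11 : ℂ := z 1 1 * (starRingEnd ℂ) c * (starRingEnd ℂ) (w 1) * (starRingEnd ℂ) (w 1)
    with hd11def
  have habsd00 : ‖d00‖ = 1 := by
    rw [hd00def]
    simp only [norm_mul, Complex.norm_conj]
    rw [hz1 0 0, habsc, habsw 0]; norm_num
  have habsd11 : ‖d11‖ = 1 := by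
    rw [hd11def]
    simp only [norm_mul, Complex.norm_conj]
    rw [hz1 1 1, habsc, habsw 1]; norm_num
  have he00 : Complex.exp (Complex.I * (d00.arg : ℂ)) = d00 := by
    have := Complex.norm_mul_exp_arg_mul_I d00
    rw [habsd00] at this
    rw [mul_comm]
    simpa using this
  have he11 : Complex.exp (Complex.I * (d11.arg : ℂ)) = d11 := by
    have := Complex.norm_mul_exp_arg_mul_I d11
    rw [habsd11] at this
    rw [mul_comm]
    simpa using this
  -- the key scalar identities
  have hcc := hmc c habsc
  have hww0 := hmc (w 0) (habsw 0)
  have hww1 := hmc (w 1) (habsw 1)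
  have k00 : c * (d00 * (w 0 * w 0)) = z 0 0 := by
    have e : c * (d00 * (w 0 * w 0)) =
        z 0 0 * ((c * (starRingEnd ℂ) c) *
          ((w 0 * (starRingEnd ℂ) (w 0)) * (w 0 * (starRingEnd ℂ) (w 0)))) := by
      rw [hd00def]; ring
    rw [e, hcc, hww0]; ring
  have k11 : c * (d11 * (w 1 * w 1)) = z 1 1 := by
    have e : c * (d11 * (w 1 * w 1)) =
        z 1 1 * ((c * (starRingEnd ℂ) c) *
          ((w 1 * (starRingEnd ℂ) (w 1)) * (w 1 * (starRingEnd ℂ) (w 1)))) := by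
      rw [hd11def]; ring
    rw [e, hcc, hww1]; ring
  have k01 : c * (1 * (w 0 * w 1)) = z 0 1 := by
    have e : c * (1 * (w 0 * w 1)) =
        z 0 1 * ((w 0 * (starRingEnd ℂ) (w 0)) * (w 1 * (starRingEnd ℂ) (w 1))) := by
      rw [hcdef]; ring
    rw [e, hww0, hww1]; ring
  have k10 : c * (1 * (w 1 * w 0)) = z 1 0 := by
    rw [← hzsym, ← k01]; ring
  -- Step 6: projector multiplication rule
  have hPP : ∀ k l i j : Fin 2,
      (outer (μ k) ⊗ₖ outer (μ l)) * (outer (μ i) ⊗ₖ outer (μ j)) =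
        if k = i ∧ l = j then outer (μ i) ⊗ₖ outer (μ j) else 0 := by
    intro k l i j
    rw [← Matrix.mul_kronecker_mul]
    show (vecMulVec (μ k) (star (μ k)) * vecMulVec (μ i) (star (μ i))) ⊗ₖ
        (vecMulVec (μ l) (star (μ l)) * vecMulVec (μ j) (star (μ j))) = _
    rw [S11.vecMulVec_mul_vecMulVec, S11.vecMulVec_mul_vecMulVec, hμ, hμ]
    by_cases hk : k = i <;> by_cases hl : l = j <;>
      simp [hk, hl, Matrix.smul_kronecker, Matrix.kronecker_smul, outer]
  set F : Matrix (Fin 2 × Fin 2) (Fin 2 × Fin 2) ℂ :=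
    Complex.exp (Complex.I * (d00.arg : ℂ)) • (outer (μ 0) ⊗ₖ outer (μ 0)) +
      outer (μ 0) ⊗ₖ outer (μ 1) + outer (μ 1) ⊗ₖ outer (μ 0) +
      Complex.exp (Complex.I * (d11.arg : ℂ)) • (outer (μ 1) ⊗ₖ outer (μ 1)) with hFdef
  set φ : Fin 2 → Fin 2 → ℂ := fun i j =>
    if i = 0 ∧ j = 0 then d00 else if i = 1 ∧ j = 1 then d11 else 1 with hφdef
  have hφz : ∀ i j, c * (φ i j * (w i * w j)) = z i j := by
    intro i j
    fin_cases i <;> fin_cases j <;>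
      simp only [hφdef, Fin.isValue] <;> norm_num
    · exact k00
    · linear_combination k01
    · linear_combination k10
    · exact k11
  have hFP : ∀ i j, F * (outer (μ i) ⊗ₖ outer (μ j))
      = φ i j • (outer (μ i) ⊗ₖ outer (μ j)) := by
    intro i j
    rw [hFdef, add_mul, add_mul, add_mul, smul_mul_assoc, smul_mul_assoc,
      hPP, hPP, hPP, hPP, he00, he11]
    fin_cases i <;> fin_cases j <;> simp [hφdef]
  have key : ∀ i j, G * (outer (μ i) ⊗ₖ outer (μ j))
      = (c • ((V ⊗ₖ V) * F)) * (outer (μ i) ⊗ₖ outer (μ j)) := by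
    intro i j
    rw [smul_mul_assoc, Matrix.mul_assoc, hFP, mul_smul_comm,
      ← Matrix.mul_kronecker_mul, hVouter, hVouter,
      Matrix.smul_kronecker, Matrix.kronecker_smul, S11.kron_vecMulVec,
      hkro, S11.mulM_vecMulVec, hz2, S11.smul_vecMulVec_left,
      smul_smul, smul_smul, smul_smul,
      show c * φ i j * w i * w j = c * (φ i j * (w i * w j)) from by ring, hφz]
  have hone4 : (outer (μ 0) ⊗ₖ outer (μ 0)) + (outer (μ 0) ⊗ₖ outer (μ 1)) +
      (outer (μ 1) ⊗ₖ outer (μ 0)) + (outer (μ 1) ⊗ₖ outer (μ 1))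
      = (1 : Matrix (Fin 2 × Fin 2) (Fin 2 × Fin 2) ℂ) := by
    have hc2 := S11.complete μ hμ
    have e : (outer (μ 0) + outer (μ 1)) ⊗ₖ (outer (μ 0) + outer (μ 1))
        = (1 : Matrix (Fin 2 × Fin 2) (Fin 2 × Fin 2) ℂ) := by
      rw [hc2, Matrix.one_kronecker_one]
    rw [Matrix.add_kronecker, Matrix.kronecker_add, Matrix.kronecker_add] at e
    rw [← e]
    abel
  have final : G = c • ((V ⊗ₖ V) * F) := by
    have e1 : G * ((outer (μ 0) ⊗ₖ outer (μ 0)) + (outer (μ 0) ⊗ₖ outer (μ 1)) +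
        (outer (μ 1) ⊗ₖ outer (μ 0)) + (outer (μ 1) ⊗ₖ outer (μ 1))) =
        (c • ((V ⊗ₖ V) * F)) * ((outer (μ 0) ⊗ₖ outer (μ 0)) +
          (outer (μ 0) ⊗ₖ outer (μ 1)) + (outer (μ 1) ⊗ₖ outer (μ 0)) +
          (outer (μ 1) ⊗ₖ outer (μ 1))) := by
      rw [Matrix.mul_add, Matrix.mul_add, Matrix.mul_add,
        Matrix.mul_add, Matrix.mul_add, Matrix.mul_add,
        key 0 0, key 0 1, key 1 0, key 1 1]
    rw [hone4, Matrix.mul_one, Matrix.mul_one] at e1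
    exact e1
  refine ⟨V, d00.arg, d11.arg, c, hVunit, habsc, final, fun i => ⟨w i, hVmul i⟩, ?_⟩
  have habseq : ‖m 0‖ = ‖m 1‖ := S11.diag_abs_eq μ μt hμ hμt
  refine ⟨‖m 0‖, norm_nonneg _, ?_, ?_⟩
  · rw [hVmul 0, dotProduct_smul, smul_eq_mul]
    exact hwm 0
  · rw [hVmul 1, dotProduct_smul, smul_eq_mul, habseq]
    exact hwm 1

end
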